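/- Let (α_{ij}) be a real symmetric 3×3 matrix, define R_{ijkl} = α_{ik}α_{jl} − α_{il}α_{jk}, and let S_{12121}, S_{12122}, S_{12131}, S_{12132}, S_{12231}, S_{12232} be arbitrary real numbers. Define r₁ = (R_{1213}R_{2323} − R_{1223}R_{1323})S_{12121} − (R_{1213}R_{1323} − R_{1223}R_{1313})S_{12122} − (R_{1212}R_{2323} − R_{1223}²)S_{12131} + (R_{1212}R_{1323} − R_{1213}R_{1223})S_{12132} + (R_{1212}R_{1323} − R_{1213}R_{1223})S_{12231} − (R_{1212}R_{1313} − R_{1213}²)S_{12232}, and h_{1212} = α_{11}S_{12232} − α_{12}S_{12132} − α_{12}S_{12231} + α_{13}S_{12122} + α_{22}S_{12131} − α_{23}S_{12121}. Then r₁ = −(det A)·h_{1212}. -/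
import Mathlib

open Matrix

theorem rivertz_r1_factorization (A : Matrix (Fin 3) (Fin 3) ℝ) (hA : A.IsSymm)
    (R : Fin 3 → Fin 3 → Fin 3 → Fin 3 → ℝ)
    (hR : ∀ i j k l, R i j k l = A i k * A j l - A i l * A j k)
    (S12121 S12122 S12131 S12132 S12231 S12232 : ℝ)
    (r1 h1212 : ℝ)
    (hr1 : r1 = (R 0 1 0 2 * R 1 2 1 2 - R 0 1 1 2 * R 0 2 1 2) * S12121
      - (R 0 1 0 2 * R 0 2 1 2 - R 0 1 1 2 * R 0 2 0 2) * S12122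
      - (R 0 1 0 1 * R 1 2 1 2 - R 0 1 1 2 ^ 2) * S12131
      + (R 0 1 0 1 * R 0 2 1 2 - R 0 1 0 2 * R 0 1 1 2) * S12132
      + (R 0 1 0 1 * R 0 2 1 2 - R 0 1 0 2 * R 0 1 1 2) * S12231
      - (R 0 1 0 1 * R 0 2 0 2 - R 0 1 0 2 ^ 2) * S12232)
    (hh : h1212 = A 0 0 * S12232 - A 0 1 * S12132 - A 0 1 * S12231
      + A 0 2 * S12122 + A 1 1 * S12131 - A 1 2 * S12121) :
    r1 = -(A.det) * h1212 := by
  have h10 : A 1 0 = A 0 1 := by rw [← hA.apply]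
  have h20 : A 2 0 = A 0 2 := by rw [← hA.apply]
  have h21 : A 2 1 = A 1 2 := by rw [← hA.apply]
  subst hr1 hh
  simp only [hR, Matrix.det_fin_three, h10, h20, h21]
  ring
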